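/- Let A_1,…,A_s ∈ M_{m,n}(r,c) and let M ∈ M_{sm,sn}(r,c) be the block-diagonal matrix whose ith diagonal m×n block of blocks is A_i and whose off-diagonal blocks are all zero (i.e., M_{(u−1)m+i,(v−1)n+j} equals (A_u)_{ij} when u = v and is the zero r×c block when u ≠ v). Then cap(M) = Π_{i=1}^s cap(A_i). In particular, if every cap(A_i) > 0 then cap(M) > 0. -/

import Mathlib

open Matrix BigOperators Filter Topology
open scoped ComplexOrder

noncomputable section

/-- The capacity of a block matrix `A ∈ M_{m,n}(r,c)`. -/
def cap {m n r c : ℕ} (A : Fin m → Fin n → Matrix (Fin r) (Fin c) ℂ) : ℝ :=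
  sInf { z : ℝ | ∃ X : Fin m → Matrix (Fin r) (Fin r) ℂ,
    (∀ i, (X i).PosDef) ∧ (∏ i, (X i).det) = 1 ∧
    z = ∏ j, ((((n : ℂ) * c / ((m : ℂ) * r)) • ∑ i, (A i j)ᴴ * X i * A i j).det).re }

/-- The index `u * m + i` in `Fin (s * m)`. -/
def finPair {s m : ℕ} (u : Fin s) (i : Fin m) : Fin (s * m) :=
  ⟨u.1 * m + i.1, by
    calc u.1 * m + i.1 < u.1 * m + m := Nat.add_lt_add_left i.isLt _
    _ = (u.1 + 1) * m := by ring
    _ ≤ s * m := Nat.mul_le_mul_right m u.isLt⟩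

lemma psdSmul {r : ℕ} {M : Matrix (Fin r) (Fin r) ℂ} (hM : M.PosSemidef)
    {t : ℝ} (ht : 0 ≤ t) : ((t : ℂ) • M).PosSemidef := by
  refine ⟨?_, fun x => ?_⟩
  · have h : ((t : ℂ) • M)ᴴ = (starRingEnd ℂ) (t : ℂ) • Mᴴ := Matrix.conjTranspose_smul _ _
    rw [Matrix.IsHermitian, h, Complex.conj_ofReal, hM.1.eq]
  · exact (hM.smul (Complex.zero_le_real.2 ht)).2 x

lemma pdSmul {r : ℕ} {M : Matrix (Fin r) (Fin r) ℂ} (hM : M.PosDef)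
    {t : ℝ} (ht : 0 < t) : ((t : ℂ) • M).PosDef := by
  refine ⟨?_, fun x hx => ?_⟩
  · have h : ((t : ℂ) • M)ᴴ = (starRingEnd ℂ) (t : ℂ) • Mᴴ := Matrix.conjTranspose_smul _ _
    rw [Matrix.IsHermitian, h, Complex.conj_ofReal, hM.1.eq]
  · exact (hM.smul (Complex.zero_lt_real.2 ht)).2 hx

lemma psdDetReNonneg {r : ℕ} {M : Matrix (Fin r) (Fin r) ℂ} (hM : M.PosSemidef) :
    0 ≤ M.det.re := by
  have h : (0 : ℂ) ≤ M.det := by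
    rw [hM.isHermitian.det_eq_prod_eigenvalues]
    exact Finset.prod_nonneg fun i _ => Complex.zero_le_real.2 (hM.eigenvalues_nonneg i)
  exact (Complex.le_def.1 h).1

lemma pdDetRe {r : ℕ} {M : Matrix (Fin r) (Fin r) ℂ} (hM : M.PosDef) :
    0 < M.det.re ∧ M.det = ((M.det.re : ℝ) : ℂ) := by
  have h := hM.det_pos
  rw [Complex.lt_def] at h
  obtain ⟨h1, h2⟩ := h
  simp only [Complex.zero_re, Complex.zero_im] at h1 h2
  exact ⟨h1, (Complex.ext (by simp) (by simp [← h2])).symm⟩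

/-- The pairing equivalence. -/
def pe {s m : ℕ} (hm : 0 < m) : Fin s × Fin m ≃ Fin (s * m) where
  toFun p := finPair p.1 p.2
  invFun k := (⟨k.1 / m, (Nat.div_lt_iff_lt_mul hm).2 k.2⟩, ⟨k.1 % m, Nat.mod_lt _ hm⟩)
  left_inv p := by
    rcases p with ⟨u, i⟩
    have h1 : (u.1 * m + i.1) / m = u.1 := by
      rw [mul_comm, Nat.mul_add_div hm, Nat.div_eq_of_lt i.2, add_zero]
    have h2 : (u.1 * m + i.1) % m = i.1 := by
      rw [mul_comm, Nat.mul_add_mod, Nat.mod_eq_of_lt i.2]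
    exact Prod.ext (Fin.ext h1) (Fin.ext h2)
  right_inv k := Fin.ext (by
    show k.1 / m * m + k.1 % m = k.1
    rw [mul_comm]; exact Nat.div_add_mod k.1 m)

lemma prod_pe {s m : ℕ} (hm : 0 < m) {β : Type*} [CommMonoid β] (f : Fin (s * m) → β) :
    ∏ k, f k = ∏ u, ∏ i, f (finPair u i) := by
  rw [← Equiv.prod_comp (pe hm) f, Fintype.prod_prod_type]
  rfl

lemma sum_pe {s m : ℕ} (hm : 0 < m) {β : Type*} [AddCommMonoid β] (f : Fin (s * m) → β) :
    ∑ k, f k = ∑ u, ∑ i, f (finPair u i) := by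
  rw [← Equiv.sum_comp (pe hm) f, Fintype.sum_prod_type]
  rfl

lemma capSet_nonneg {m n r c : ℕ} (A : Fin m → Fin n → Matrix (Fin r) (Fin c) ℂ) :
    ∀ z ∈ { z : ℝ | ∃ X : Fin m → Matrix (Fin r) (Fin r) ℂ,
      (∀ i, (X i).PosDef) ∧ (∏ i, (X i).det) = 1 ∧
      z = ∏ j, ((((n : ℂ) * c / ((m : ℂ) * r)) • ∑ i, (A i j)ᴴ * X i * A i j).det).re },
    0 ≤ z := by
  rintro z ⟨X, hX, -, rfl⟩
  refine Finset.prod_nonneg fun j _ => psdDetReNonneg ?_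
  have hsum : (∑ i, (A i j)ᴴ * X i * A i j).PosSemidef :=
    Finset.sum_induction _ _ (fun a b ha hb => ha.add hb) Matrix.PosSemidef.zero
      (fun i _ => ((hX i).posSemidef).conjTranspose_mul_mul_same _)
  have h : ((n : ℂ) * c / ((m : ℂ) * r)) = (((n * c / (m * r) : ℝ)) : ℂ) := by push_cast; ring
  rw [h]
  exact psdSmul hsum (by positivity)

lemma capSet_nonempty {m n r c : ℕ} (A : Fin m → Fin n → Matrix (Fin r) (Fin c) ℂ) :
    Set.Nonempty { z : ℝ | ∃ X : Fin m → Matrix (Fin r) (Fin r) ℂ,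
      (∀ i, (X i).PosDef) ∧ (∏ i, (X i).det) = 1 ∧
      z = ∏ j, ((((n : ℂ) * c / ((m : ℂ) * r)) • ∑ i, (A i j)ᴴ * X i * A i j).det).re } :=
  ⟨_, fun _ => 1, fun _ => Matrix.PosDef.one, by simp, rfl⟩

lemma capSet_bddBelow {m n r c : ℕ} (A : Fin m → Fin n → Matrix (Fin r) (Fin c) ℂ) :
    BddBelow { z : ℝ | ∃ X : Fin m → Matrix (Fin r) (Fin r) ℂ,
      (∀ i, (X i).PosDef) ∧ (∏ i, (X i).det) = 1 ∧
      z = ∏ j, ((((n : ℂ) * c / ((m : ℂ) * r)) • ∑ i, (A i j)ᴴ * X i * A i j).det).re } :=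
  ⟨0, fun z hz => capSet_nonneg A z hz⟩

lemma cap_nonneg {m n r c : ℕ} (A : Fin m → Fin n → Matrix (Fin r) (Fin c) ℂ) :
    0 ≤ cap A :=
  Real.sInf_nonneg (capSet_nonneg A)

/-- Claim 2.14: the capacity of a block-diagonal matrix is the product of the capacities of
its diagonal blocks. -/
theorem cap_blockDiagonal {s m n r c : ℕ}
    (hs : 0 < s) (hm : 0 < m) (hn : 0 < n) (hr : 0 < r) (hc : 0 < c)
    (A : Fin s → Fin m → Fin n → Matrix (Fin r) (Fin c) ℂ)
    (M : Fin (s * m) → Fin (s * n) → Matrix (Fin r) (Fin c) ℂ)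
    (hM : ∀ (u : Fin s) (i : Fin m) (u' : Fin s) (j : Fin n),
      M (finPair u i) (finPair u' j) = if u = u' then A u i j else 0) :
    cap M = ∏ u, cap (A u) := by
  classical
  have hsC : (s : ℂ) ≠ 0 := Nat.cast_ne_zero.2 hs.ne'
  have hscale : (((s * n : ℕ) : ℂ) * c / (((s * m : ℕ) : ℂ) * r)) = (n : ℂ) * c / ((m : ℂ) * r) := by
    push_cast
    rw [show (s : ℂ) * n * c = (s : ℂ) * (n * c) by ring,
        show (s : ℂ) * m * r = (s : ℂ) * (m * r) by ring,
        mul_div_mul_left _ _ hsC]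
  -- value splitting
  have hvalM : ∀ X : Fin (s * m) → Matrix (Fin r) (Fin r) ℂ,
      (∏ j, (((((s * n : ℕ) : ℂ)) * c / ((((s * m : ℕ) : ℂ)) * r)) •
          ∑ i, (M i j)ᴴ * X i * M i j).det.re)
      = ∏ u, ∏ j, ((((n : ℂ) * c / ((m : ℂ) * r)) •
          ∑ i, (A u i j)ᴴ * X (finPair u i) * A u i j).det.re) := by
    intro X
    rw [prod_pe hn]
    refine Finset.prod_congr rfl fun u _ => Finset.prod_congr rfl fun j _ => ?_
    rw [hscale]
    have hsum : ∑ k, (M k (finPair u j))ᴴ * X k * M k (finPair u j)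
        = ∑ i, (A u i j)ᴴ * X (finPair u i) * A u i j := by
      rw [sum_pe hm]
      rw [Finset.sum_eq_single_of_mem u (Finset.mem_univ u)
        (fun v _ hv => by simp [hM, hv])]
      refine Finset.sum_congr rfl fun i _ => ?_
      rw [hM]
      simp
    rw [hsum]
  apply le_antisymm
  · -- cap M ≤ ∏ cap
    have key : ∀ ε : ℝ, 0 < ε → cap M ≤ ∏ u, (cap (A u) + ε) := by
      intro ε hε
      have hchoice : ∀ u, ∃ z ∈ { z : ℝ | ∃ X : Fin m → Matrix (Fin r) (Fin r) ℂ,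
          (∀ i, (X i).PosDef) ∧ (∏ i, (X i).det) = 1 ∧
          z = ∏ j, ((((n : ℂ) * c / ((m : ℂ) * r)) • ∑ i, (A u i j)ᴴ * X i * A u i j).det).re },
          z < cap (A u) + ε :=
        fun u => Real.lt_sInf_add_pos (capSet_nonempty (A u)) hε
      choose z hz1 hz2 using hchoice
      choose Xs hpd hdet hvalz using hz1
      set X : Fin (s * m) → Matrix (Fin r) (Fin r) ℂ :=
        fun k => Xs ((pe hm).symm k).1 ((pe hm).symm k).2 with hXdef
      have hXfp : ∀ u i, X (finPair u i) = Xs u i := by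
        intro u i
        have h : (pe hm).symm (finPair u i) = (u, i) := (pe hm).symm_apply_apply (u, i)
        rw [hXdef]
        simp only [h]
      have hmem : (∏ u, z u) ∈ { w : ℝ | ∃ Y : Fin (s * m) → Matrix (Fin r) (Fin r) ℂ,
          (∀ i, (Y i).PosDef) ∧ (∏ i, (Y i).det) = 1 ∧
          w = ∏ j, (((((s * n : ℕ) : ℂ)) * c / ((((s * m : ℕ) : ℂ)) * r)) •
            ∑ i, (M i j)ᴴ * Y i * M i j).det.re } := by
        refine ⟨X, fun k => hpd _ _, ?_, ?_⟩
        · rw [prod_pe hm]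
          refine Finset.prod_eq_one fun u _ => ?_
          rw [Finset.prod_congr rfl fun i _ => by rw [hXfp]]
          exact hdet u
        · rw [hvalM X]
          refine (Finset.prod_congr rfl fun u _ => ?_).symm
          rw [hvalz u]
          refine Finset.prod_congr rfl fun j _ => ?_
          simp_rw [hXfp]
      calc cap M ≤ ∏ u, z u := csInf_le (capSet_bddBelow M) hmem
        _ ≤ ∏ u, (cap (A u) + ε) :=
          Finset.prod_le_prod
            (fun u _ => capSet_nonneg (A u) _ ⟨Xs u, hpd u, hdet u, hvalz u⟩)
            (fun u _ => (hz2 u).le)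
    have hcont : Tendsto (fun ε : ℝ => ∏ u, (cap (A u) + ε)) (𝓝[>] 0)
        (𝓝 (∏ u, (cap (A u) + 0))) := by
      refine Tendsto.mono_left ?_ nhdsWithin_le_nhds
      exact Continuous.tendsto
        (continuous_finset_prod _ fun u _ => continuous_const.add continuous_id) 0
    simp only [add_zero] at hcont
    exact ge_of_tendsto hcont
      (Filter.eventually_of_mem self_mem_nhdsWithin (fun ε hε => key ε hε))
  · -- ∏ cap ≤ cap M
    refine le_csInf (capSet_nonempty M) ?_
    rintro w ⟨X, hpd, hdet, rfl⟩
    have hdetpos : ∀ k, 0 < (X k).det.re := fun k => (pdDetRe (hpd k)).1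
    have hdetC : ∀ k, (X k).det = (((X k).det.re : ℝ) : ℂ) := fun k => (pdDetRe (hpd k)).2
    set d : Fin s → ℝ := fun u => ∏ i, (X (finPair u i)).det.re with hd
    have hdpos : ∀ u, 0 < d u := fun u => Finset.prod_pos fun i _ => hdetpos _
    have hdprod : ∏ u, d u = 1 := by
      have h1 : (((∏ u, d u : ℝ)) : ℂ) = 1 := by
        rw [← hdet, prod_pe hm]
        push_cast
        refine Finset.prod_congr rfl fun u _ => ?_
        simp only [hd]
        push_cast
        exact (Finset.prod_congr rfl fun i _ => hdetC _).symm
      exact_mod_cast h1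
    set t : Fin s → ℝ := fun u => (d u) ^ (-(1 / ((m : ℝ) * r))) with htdef
    have htpos : ∀ u, 0 < t u := fun u => Real.rpow_pos_of_pos (hdpos u) _
    have htpow : ∀ u, (t u) ^ (m * r) = (d u)⁻¹ := by
      intro u
      rw [htdef]
      rw [← Real.rpow_natCast ((d u) ^ (-(1 / ((m : ℝ) * r)))) (m * r),
        ← Real.rpow_mul (hdpos u).le]
      rw [show -(1 / ((m : ℝ) * r)) * ((m * r : ℕ) : ℝ) = -1 by
        push_cast
        field_simp]
      rw [Real.rpow_neg_one]
    have hcaple : ∀ u, cap (A u) ≤ (t u) ^ (c * n) *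
        ∏ j, ((((n : ℂ) * c / ((m : ℂ) * r)) •
          ∑ i, (A u i j)ᴴ * X (finPair u i) * A u i j).det.re) := by
      intro u
      have hS : ∀ j, ∑ i, (A u i j)ᴴ * (((t u : ℝ) : ℂ) • X (finPair u i)) * A u i j
          = ((t u : ℝ) : ℂ) • ∑ i, (A u i j)ᴴ * X (finPair u i) * A u i j := by
        intro j
        rw [Finset.smul_sum]
        refine Finset.sum_congr rfl fun i _ => ?_
        rw [Matrix.mul_smul, Matrix.smul_mul]
      have hmem : ((t u) ^ (c * n) *
          ∏ j, ((((n : ℂ) * c / ((m : ℂ) * r)) •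
            ∑ i, (A u i j)ᴴ * X (finPair u i) * A u i j).det.re))
          ∈ { z : ℝ | ∃ Y : Fin m → Matrix (Fin r) (Fin r) ℂ,
            (∀ i, (Y i).PosDef) ∧ (∏ i, (Y i).det) = 1 ∧
            z = ∏ j, ((((n : ℂ) * c / ((m : ℂ) * r)) •
              ∑ i, (A u i j)ᴴ * Y i * A u i j).det).re } := by
        refine ⟨fun i => ((t u : ℝ) : ℂ) • X (finPair u i),
          fun i => pdSmul (hpd _) (htpos u), ?_, ?_⟩
        · simp only [Matrix.det_smul, Fintype.card_fin]
          rw [Finset.prod_mul_distrib, Finset.prod_const, Finset.card_univ, Fintype.card_fin,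
            ← pow_mul]
          have h2 : ∏ i : Fin m, (X (finPair u i)).det = ((d u : ℝ) : ℂ) := by
            rw [hd]
            push_cast
            exact Finset.prod_congr rfl fun i _ => hdetC _
          rw [h2, ← Complex.ofReal_pow, show r * m = m * r by ring, htpow u,
            ← Complex.ofReal_mul, inv_mul_cancel₀ (hdpos u).ne', Complex.ofReal_one]
        · refine (calc
            ∏ j, ((((n : ℂ) * c / ((m : ℂ) * r)) •
                ∑ i, (A u i j)ᴴ * (((t u : ℝ) : ℂ) • X (finPair u i)) * A u i j).det).re
              = ∏ j, (t u) ^ c * ((((n : ℂ) * c / ((m : ℂ) * r)) •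
                ∑ i, (A u i j)ᴴ * X (finPair u i) * A u i j).det).re := by
                refine Finset.prod_congr rfl fun j _ => ?_
                rw [hS, smul_comm, Matrix.det_smul, Fintype.card_fin,
                  ← Complex.ofReal_pow, Complex.re_ofReal_mul]
            _ = (t u) ^ (c * n) * ∏ j, ((((n : ℂ) * c / ((m : ℂ) * r)) •
                ∑ i, (A u i j)ᴴ * X (finPair u i) * A u i j).det).re := by
                rw [Finset.prod_mul_distrib, Finset.prod_const, Finset.card_univ,
                  Fintype.card_fin, ← pow_mul]).symm
      exact csInf_le (capSet_bddBelow (A u)) hmem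
    have hprod_t : ∏ u, (t u) ^ (c * n) = 1 := by
      have h3 : ∀ u, (t u) ^ (c * n) = (d u) ^ (-(1 / ((m : ℝ) * r)) * ((c * n : ℕ) : ℝ)) := by
        intro u
        rw [htdef, ← Real.rpow_natCast _ (c * n), ← Real.rpow_mul (hdpos u).le]
      simp_rw [h3]
      rw [Real.finset_prod_rpow _ _ (fun u _ => (hdpos u).le) _, hdprod, Real.one_rpow]
    rw [hvalM X]
    calc ∏ u, cap (A u)
        ≤ ∏ u, ((t u) ^ (c * n) * ∏ j, ((((n : ℂ) * c / ((m : ℂ) * r)) •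
            ∑ i, (A u i j)ᴴ * X (finPair u i) * A u i j).det).re) :=
          Finset.prod_le_prod (fun u _ => cap_nonneg _) (fun u _ => hcaple u)
      _ = (∏ u, (t u) ^ (c * n)) * ∏ u, ∏ j, ((((n : ℂ) * c / ((m : ℂ) * r)) •
            ∑ i, (A u i j)ᴴ * X (finPair u i) * A u i j).det).re := Finset.prod_mul_distrib
      _ = _ := by rw [hprod_t, one_mul]
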